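/- For every p > 1 and every x ∈ (0,1), the following two-sided bound holds: (p(1+p)(1+x^p) + x^p)·x / (p(1+p)(1+x^p)^(1+1/p)) < arctan_p(x) < 2^(1/p)·b_p·(x^p/(1+x^p))^(1/p). -/

import Mathlib

open Real

/-- The generalized inverse tangent: `arctan_p x = ∫₀ˣ (1 + tᵖ)⁻¹ dt`. -/
noncomputable def arctanp (p x : ℝ) : ℝ := ∫ t in (0:ℝ)..x, (1 + t ^ p)⁻¹

/-- The constant `b_p = arctan_p 1`. -/
noncomputable def bp (p : ℝ) : ℝ := arctanp p 1

namespace ArctanpAux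

open Set

lemma aux_fcont {p : ℝ} (hp : 0 < p) {t : ℝ} (ht : 0 ≤ t) :
    ContinuousAt (fun t : ℝ => (1 + t ^ p)⁻¹) t := by
  have h1 : ContinuousAt (fun t : ℝ => t ^ p) t :=
    Real.continuousAt_rpow_const t p (Or.inr hp.le)
  have h2 : (0:ℝ) < 1 + t ^ p := by positivity
  exact (continuousAt_const.add h1).inv₀ h2.ne'

lemma aux_fcontOn {p : ℝ} (hp : 0 < p) (a b : ℝ) (ha : 0 ≤ a) :
    ContinuousOn (fun t : ℝ => (1 + t ^ p)⁻¹) (Icc a b) :=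
  fun t ht => (aux_fcont hp (ha.trans ht.1)).continuousWithinAt

lemma arctanp_hasDerivAt {p x : ℝ} (hp : 0 < p) (hx : 0 < x) :
    HasDerivAt (arctanp p) ((1 + x ^ p)⁻¹) x := by
  have hint : IntervalIntegrable (fun t : ℝ => (1 + t ^ p)⁻¹) MeasureTheory.volume 0 x := by
    apply ContinuousOn.intervalIntegrable
    rw [uIcc_of_le hx.le]
    exact aux_fcontOn hp 0 x le_rfl
  have hmeas : StronglyMeasurableAtFilter (fun t : ℝ => (1 + t ^ p)⁻¹) (nhds x)
      MeasureTheory.volume := by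
    refine ContinuousAt.stronglyMeasurableAtFilter (s := Ioi 0) isOpen_Ioi
      (fun y hy => aux_fcont hp (le_of_lt hy)) x hx
  exact intervalIntegral.integral_hasDerivAt_right hint hmeas (aux_fcont hp hx.le)

lemma arctanp_continuousOn {p : ℝ} (hp : 0 < p) :
    ContinuousOn (arctanp p) (Icc 0 1) := by
  have := intervalIntegral.continuousOn_primitive_interval
    (f := fun t : ℝ => (1 + t ^ p)⁻¹) (a := 0) (b := 1) (μ := MeasureTheory.volume) ?_
  · show ContinuousOn (fun x => ∫ t in (0:ℝ)..x, (1 + t ^ p)⁻¹) (Icc 0 1)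
    simpa [uIcc_of_le (zero_le_one' ℝ), arctanp] using this
  · rw [uIcc_of_le (zero_le_one' ℝ)]
    exact (aux_fcontOn hp 0 1 le_rfl).integrableOn_Icc

lemma arctanp_lt_self {p x : ℝ} (hp : 0 < p) (hx : 0 < x) : arctanp p x < x := by
  have h := intervalIntegral.integral_lt_integral_of_continuousOn_of_le_of_exists_lt
    (f := fun t : ℝ => (1 + t ^ p)⁻¹) (g := fun _ => (1:ℝ)) hx
    (aux_fcontOn hp 0 x le_rfl) continuousOn_const ?_ ?_
  · simpa [arctanp] using h
  · intro t ht
    have h1 : (0:ℝ) < t ^ p := Real.rpow_pos_of_pos ht.1 p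
    rw [inv_le_one_iff₀]; right; linarith
  · exact ⟨x, ⟨hx.le, le_rfl⟩, by
      have h1 : (0:ℝ) < x ^ p := Real.rpow_pos_of_pos hx p
      rw [inv_lt_one_iff₀]; right; linarith⟩

lemma g_hasDerivAt {p x : ℝ} (hp : 1 < p) (hx : 0 < x) :
    HasDerivAt (fun y : ℝ => y * (1 + y ^ p) ^ (-(1/p)))
      ((1 + x ^ p) ^ (-(1/p) - 1)) x := by
  have hp0 : 0 < p := lt_trans one_pos hp
  have hc : 0 < 1 + x ^ p := by positivity
  have h1 : HasDerivAt (fun y : ℝ => y ^ p) (p * x ^ (p-1)) x :=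
    Real.hasDerivAt_rpow_const (Or.inl hx.ne')
  have h2 : HasDerivAt (fun y : ℝ => 1 + y ^ p) (p * x ^ (p-1)) x := h1.const_add 1
  have h3 : HasDerivAt (fun y : ℝ => (1 + y ^ p) ^ (-(1/p)))
      ((p * x ^ (p-1)) * (-(1/p)) * (1 + x ^ p) ^ (-(1/p) - 1)) x :=
    h2.rpow_const (Or.inl hc.ne')
  have h4 := (hasDerivAt_id x).mul h3
  convert h4 using 1
  case e'_4 => rfl
  case e'_5 => rfl
  case e'_8 => rfl
  have ea : x ^ (p-1) = x ^ p / x := by rw [Real.rpow_sub hx, Real.rpow_one]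
  have e1 : (1 + x ^ p) ^ (-(1/p) - 1)
      = (1 + x ^ p) ^ (-(1/p)) * (1 + x ^ p)⁻¹ := by
    rw [show -(1/p) - 1 = -(1/p) + (-1) by ring, Real.rpow_add hc, Real.rpow_neg_one]
  rw [ea, e1, id_eq]
  field_simp
  ring

lemma L_hasDerivAt {p x : ℝ} (hp : 1 < p) (hx : 0 < x) :
    HasDerivAt (fun y : ℝ => y * (1 + y ^ p) ^ (-(1/p))
        + y ^ (1+p) * (1 + y ^ p) ^ (-(1+1/p)) / (p * (1+p)))
      ((1 + x ^ p) ^ (-(1/p) - 1)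
        + x ^ p * (1 + x ^ p) ^ (-(1+1/p) - 1) / p) x := by
  have hp0 : 0 < p := lt_trans one_pos hp
  have hc : 0 < 1 + x ^ p := by positivity
  have h1 : HasDerivAt (fun y : ℝ => y ^ p) (p * x ^ (p-1)) x :=
    Real.hasDerivAt_rpow_const (Or.inl hx.ne')
  have h2 : HasDerivAt (fun y : ℝ => 1 + y ^ p) (p * x ^ (p-1)) x := h1.const_add 1
  have h5 : HasDerivAt (fun y : ℝ => y ^ (1+p)) ((1+p) * x ^ (1+p-1)) x :=
    Real.hasDerivAt_rpow_const (Or.inl hx.ne')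
  have h6 : HasDerivAt (fun y : ℝ => (1 + y ^ p) ^ (-(1+1/p)))
      ((p * x ^ (p-1)) * (-(1+1/p)) * (1 + x ^ p) ^ (-(1+1/p) - 1)) x :=
    h2.rpow_const (Or.inl hc.ne')
  have h8 := (g_hasDerivAt hp hx).add ((h5.mul h6).div_const (p * (1+p)))
  convert h8 using 1
  case e'_4 => rfl
  case e'_5 => rfl
  case e'_8 => rfl
  have ea : x ^ (p-1) = x ^ p / x := by rw [Real.rpow_sub hx, Real.rpow_one]
  have eb : x ^ (1+p-1) = x ^ p := by norm_num
  have ec : x ^ (1+p) = x * x ^ p := by rw [Real.rpow_add hx, Real.rpow_one]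
  have e4 : (1 + x ^ p) ^ (-(1+1/p) - 1)
      = (1 + x ^ p) ^ (-(1+1/p)) * (1 + x ^ p)⁻¹ := by
    rw [show -(1+1/p) - 1 = -(1+1/p) + (-1) by ring, Real.rpow_add hc, Real.rpow_neg_one]
  rw [ea, eb, ec, e4]
  have hb : (0:ℝ) < (1 + x ^ p) ^ (-(1+1/p)) := Real.rpow_pos_of_pos hc _
  field_simp
  ring

lemma lower_deriv_lt {p x : ℝ} (hp : 1 < p) (hx : 0 < x) :
    (1 + x ^ p) ^ (-(1/p) - 1) + x ^ p * (1 + x ^ p) ^ (-(1+1/p) - 1) / p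
      < (1 + x ^ p)⁻¹ := by
  have hp0 : 0 < p := lt_trans one_pos hp
  set s : ℝ := x ^ p with hs_def
  have hs : 0 < s := Real.rpow_pos_of_pos hx p
  have hc : 0 < 1 + s := by linarith
  set b : ℝ := (1 + s) ^ (1/p) with hb_def
  have hb : 0 < b := Real.rpow_pos_of_pos hc _
  have hq : 1 < 1 + 1/p := by
    have : 0 < 1/p := by positivity
    linarith
  have hbern : 1 + (1 + 1/p) * s < (1 + s) ^ (1 + 1/p) :=
    one_add_mul_self_lt_rpow_one_add (by linarith) hs.ne' hq
  have hcb : (1 + s) ^ (1 + 1/p) = (1 + s) * b := by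
    rw [hb_def, Real.rpow_add hc, Real.rpow_one]
  have key : 1 + s + s / p < (1 + s) * b := by
    rw [← hcb]
    have : 1 + (1 + 1/p) * s = 1 + s + s / p := by ring
    linarith [hbern, this]
  have e1 : (1 + s) ^ (-(1/p) - 1) = (b * (1 + s))⁻¹ := by
    rw [show -(1/p) - 1 = -((1/p) + 1) by ring, Real.rpow_neg hc.le,
      Real.rpow_add hc, Real.rpow_one]
  have e2 : (1 + s) ^ (-(1+1/p) - 1) = (b * (1 + s) * (1 + s))⁻¹ := by
    rw [show -(1+1/p) - 1 = -((1/p) + 1 + 1) by ring, Real.rpow_neg hc.le,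
      Real.rpow_add hc, Real.rpow_add hc, Real.rpow_one]
    try ring_nf
  rw [e1, e2]
  have eL : (b * (1 + s))⁻¹ + s * (b * (1 + s) * (1 + s))⁻¹ / p
      = (p * (1 + s) + s) / (p * b * (1 + s) ^ 2) := by
    field_simp
  rw [eL, inv_eq_one_div, div_lt_div_iff₀ (by positivity) (by positivity)]
  have key2 : p * (1 + s) * (1 + s + s / p) = p * (1 + s) ^ 2 + s * (1 + s) := by
    field_simp
  nlinarith [mul_lt_mul_of_pos_left key (by positivity : (0:ℝ) < p * (1 + s)), key2]

end ArctanpAux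

open ArctanpAux Set in
theorem arctanp_bounds (p x : ℝ) (hp : 1 < p) (hx : x ∈ Set.Ioo (0:ℝ) 1) :
    (p * (1 + p) * (1 + x ^ p) + x ^ p) * x / (p * (1 + p) * (1 + x ^ p) ^ (1 + 1 / p))
        < arctanp p x ∧
      arctanp p x < (2:ℝ) ^ (1 / p) * bp p * (x ^ p / (1 + x ^ p)) ^ (1 / p) := by
  obtain ⟨hx0, hx1⟩ := hx
  have hp0 : 0 < p := lt_trans one_pos hp
  have hxp : 0 < x ^ p := Real.rpow_pos_of_pos hx0 p
  have hc : 0 < 1 + x ^ p := by positivity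
  have hcb : (0:ℝ) < (1 + x ^ p) ^ (1/p) := Real.rpow_pos_of_pos hc _
  constructor
  · -- lower bound
    set L : ℝ → ℝ := fun y => y * (1 + y ^ p) ^ (-(1/p))
        + y ^ (1+p) * (1 + y ^ p) ^ (-(1+1/p)) / (p * (1+p)) with hL_def
    have hLcont : ContinuousOn L (Icc 0 1) := by
      intro y hy
      have h1 : ContinuousAt (fun y : ℝ => y ^ p) y :=
        Real.continuousAt_rpow_const y p (Or.inr hp0.le)
      have h2 : ContinuousAt (fun y : ℝ => 1 + y ^ p) y := continuousAt_const.add h1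
      have hcy : (0:ℝ) < 1 + y ^ p := by
        have : (0:ℝ) ≤ y ^ p := Real.rpow_nonneg hy.1 p
        linarith
      have h3 : ContinuousAt (fun y : ℝ => (1 + y ^ p) ^ (-(1/p))) y :=
        h2.rpow_const (Or.inl hcy.ne')
      have h4 : ContinuousAt (fun y : ℝ => (1 + y ^ p) ^ (-(1+1/p))) y :=
        h2.rpow_const (Or.inl hcy.ne')
      have h5 : ContinuousAt (fun y : ℝ => y ^ (1+p)) y :=
        Real.continuousAt_rpow_const y (1+p) (Or.inr (by linarith))
      exact ((continuousAt_id.mul h3).add ((h5.mul h4).div_const _)).continuousWithinAt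
    have hD : StrictMonoOn (fun y => arctanp p y - L y) (Icc 0 1) := by
      apply strictMonoOn_of_deriv_pos (convex_Icc 0 1)
      · exact (arctanp_continuousOn hp0).sub hLcont
      · intro y hy
        rw [interior_Icc] at hy
        have hd := (arctanp_hasDerivAt hp0 hy.1).sub (L_hasDerivAt hp hy.1)
        rw [show deriv (fun y => arctanp p y - L y) y = _ from hd.deriv]
        have := lower_deriv_lt hp hy.1
        linarith
    have h0x : (fun y => arctanp p y - L y) 0 < (fun y => arctanp p y - L y) x :=
      hD ⟨le_rfl, zero_le_one⟩ ⟨hx0.le, hx1.le⟩ hx0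
    have hA0 : arctanp p 0 = 0 := by simp [arctanp]
    have hL0 : L 0 = 0 := by
      simp only [hL_def]
      rw [Real.zero_rpow (by positivity : (1:ℝ) + p ≠ 0)]
      simp
    have hLx : L x < arctanp p x := by
      simp only [hA0, hL0, sub_zero] at h0x
      linarith [h0x]
    -- identify L x with the stated expression
    have eL : (p * (1 + p) * (1 + x ^ p) + x ^ p) * x
        / (p * (1 + p) * (1 + x ^ p) ^ (1 + 1 / p)) = L x := by
      have e0 : (1 + x ^ p) ^ (1 + 1/p) = (1 + x ^ p) * (1 + x ^ p) ^ (1/p) := by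
        rw [Real.rpow_add hc, Real.rpow_one]
      have e1 : (1 + x ^ p) ^ (-(1/p)) = ((1 + x ^ p) ^ (1/p))⁻¹ := by
        rw [Real.rpow_neg hc.le]
      have e2 : (1 + x ^ p) ^ (-(1+1/p)) = ((1 + x ^ p) * (1 + x ^ p) ^ (1/p))⁻¹ := by
        rw [Real.rpow_neg hc.le, e0]
      have e3 : x ^ (1+p) = x * x ^ p := by rw [Real.rpow_add hx0, Real.rpow_one]
      simp only [hL_def]
      rw [e0, e1, e2, e3]
      field_simp
    rw [eL]; exact hLx
  · -- upper bound
    set g : ℝ → ℝ := fun y => y * (1 + y ^ p) ^ (-(1/p)) with hg_def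
    have hgpos : ∀ y ∈ Ioc (0:ℝ) 1, 0 < g y := by
      intro y hy
      have hcy : (0:ℝ) < 1 + y ^ p := by
        have : (0:ℝ) < y ^ p := Real.rpow_pos_of_pos hy.1 p
        linarith
      exact mul_pos hy.1 (Real.rpow_pos_of_pos hcy _)
    have hgcont : ContinuousOn g (Ioc 0 1) := by
      intro y hy
      have h1 : ContinuousAt (fun y : ℝ => y ^ p) y :=
        Real.continuousAt_rpow_const y p (Or.inr hp0.le)
      have hcy : (0:ℝ) < 1 + y ^ p := by
        have : (0:ℝ) < y ^ p := Real.rpow_pos_of_pos hy.1 p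
        linarith
      have h3 : ContinuousAt (fun y : ℝ => (1 + y ^ p) ^ (-(1/p))) y :=
        (continuousAt_const.add h1).rpow_const (Or.inl hcy.ne')
      exact (continuousAt_id.mul h3).continuousWithinAt
    have hmono : StrictMonoOn (fun y => arctanp p y / g y) (Ioc 0 1) := by
      apply strictMonoOn_of_deriv_pos (convex_Ioc 0 1)
      · exact ((arctanp_continuousOn hp0).mono Ioc_subset_Icc_self).div hgcont
          (fun y hy => (hgpos y hy).ne')
      · intro y hy
        rw [interior_Ioc] at hy
        have hy0 := hy.1
        have hcy : (0:ℝ) < 1 + y ^ p := by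
          have : (0:ℝ) < y ^ p := Real.rpow_pos_of_pos hy0 p
          linarith
        have hgy : 0 < g y := hgpos y ⟨hy.1, hy.2.le⟩
        have hd := (arctanp_hasDerivAt hp0 hy0).div (g_hasDerivAt hp hy0) hgy.ne'
        rw [show deriv (fun y => arctanp p y / g y) y = _ from hd.deriv]
        have hnum : (1 + y ^ p)⁻¹ * g y - arctanp p y * (1 + y ^ p) ^ (-(1/p) - 1)
            = (y - arctanp p y) * (1 + y ^ p) ^ (-(1/p) - 1) := by
          have e1 : (1 + y ^ p) ^ (-(1/p) - 1)
              = (1 + y ^ p) ^ (-(1/p)) * (1 + y ^ p)⁻¹ := by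
            rw [show -(1/p) - 1 = -(1/p) + (-1) by ring, Real.rpow_add hcy,
              Real.rpow_neg_one]
          simp only [hg_def]
          rw [e1]
          ring
        rw [hnum]
        have hlt : arctanp p y < y := arctanp_lt_self hp0 hy0
        have hppos : (0:ℝ) < (1 + y ^ p) ^ (-(1/p) - 1) := Real.rpow_pos_of_pos hcy _
        exact div_pos (mul_pos (sub_pos.2 hlt) hppos) (pow_pos hgy 2)
    have hx1' : (fun y => arctanp p y / g y) x < (fun y => arctanp p y / g y) 1 :=
      hmono ⟨hx0, hx1.le⟩ ⟨one_pos, le_rfl⟩ hx1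
    have hg1 : g 1 = ((2:ℝ) ^ (1/p))⁻¹ := by
      simp only [hg_def]
      rw [Real.one_rpow, Real.rpow_neg (by norm_num : (0:ℝ) ≤ 1 + 1)]
      norm_num
    have hgx : 0 < g x := hgpos x ⟨hx0, hx1.le⟩
    have h2p : (0:ℝ) < (2:ℝ) ^ (1/p) := Real.rpow_pos_of_pos two_pos _
    have hfin : arctanp p x < (2:ℝ) ^ (1/p) * bp p * g x := by
      have := hx1'
      simp only [hg1] at this
      rw [div_lt_iff₀ hgx] at this
      calc arctanp p x < bp p / ((2:ℝ) ^ (1/p))⁻¹ * g x := this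
        _ = (2:ℝ) ^ (1/p) * bp p * g x := by
            rw [div_eq_mul_inv, inv_inv]; ring
    have egx : (x ^ p / (1 + x ^ p)) ^ (1/p) = g x := by
      simp only [hg_def]
      rw [Real.div_rpow hxp.le hc.le, ← Real.rpow_mul hx0.le,
        mul_one_div_cancel hp0.ne', Real.rpow_one, Real.rpow_neg hc.le,
        div_eq_mul_inv]
    rw [egx]
    exact hfin
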